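/- arXiv:2310.14160 — 2 statements merged into one kernel-verified Lean document; each statement's English description precedes it below -/
import Mathlib

section
/- In the 2-CSP-to-4-CSP construction: if there exists an assignment ψ : V → Σ with val_G(ψ) = 1, then val_{G'}(ψ'^ini ↭ ψ'^tar) = 1. -/
/-- Two assignments differ on at most one vertex. -/
def adjOne {V A : Type*} (ψ φ : V → A) : Prop := ∃ v0, ∀ v, v ≠ v0 → ψ v = φ v

/-- Value of an assignment: the fraction of constraints (indexed by `ι`, with multiplicity)
that it satisfies. -/
noncomputable def valC {V A ι : Type*} [Fintype ι] (sat : ι → (V → A) → Prop)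
    (ψ : V → A) : ℝ :=
  (Nat.card {i : ι // sat i ψ} : ℝ) / (Fintype.card ι : ℝ)

/-- The minimum value along a sequence of assignments. -/
noncomputable def valSeqC {V A ι : Type*} [Fintype ι] (sat : ι → (V → A) → Prop)
    (l : List (V → A)) : ℝ :=
  (l.map (valC sat)).foldr min 1

/-- `maxValC sat ψi ψt` is the maximum, over all reconfiguration sequences from `ψi` to `ψt`
(finite sequences of assignments starting at `ψi`, ending at `ψt`, consecutive assignments
differing on at most one vertex), of the minimum value along the sequence. -/
noncomputable def maxValC {V A ι : Type*} [Fintype ι] (sat : ι → (V → A) → Prop)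
    (ψi ψt : V → A) : ℝ :=
  sSup {r : ℝ | ∃ l : List (V → A), l ≠ [] ∧ l.head? = some ψi ∧ l.getLast? = some ψt ∧
    l.Chain' adjOne ∧ r = valSeqC sat l}

section aux

variable {V A ι : Type*}

lemma head?_append_some {α : Type*} {l1 l2 : List α} {x : α} (h : l1.head? = some x) :
    (l1 ++ l2).head? = some x := by
  cases l1 with
  | nil => simp at h
  | cons c t => simpa using h

lemma getLast?_append_some {α : Type*} {l1 l2 : List α} {x : α} (h : l2.getLast? = some x) :
    (l1 ++ l2).getLast? = some x := by
  rw [List.getLast?_append, h]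
  rfl

section morph
variable [DecidableEq V]

/-- Morphing sequence: change `φ` into `ψ` one vertex at a time along the list `L`. -/
def morphSeq (ψ : V → A) : (V → A) → List V → List (V → A)
  | φ, [] => [φ]
  | φ, v :: L => φ :: morphSeq ψ (Function.update φ v (ψ v)) L

lemma morphSeq_cons (ψ φ : V → A) (v : V) (L : List V) :
    morphSeq ψ φ (v :: L) = φ :: morphSeq ψ (Function.update φ v (ψ v)) L := by
  simp [morphSeq]

lemma morphSeq_ne_nil (ψ φ : V → A) (L : List V) : morphSeq ψ φ L ≠ [] := by
  cases L <;> simp [morphSeq]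

lemma morphSeq_head? (ψ φ : V → A) (L : List V) : (morphSeq ψ φ L).head? = some φ := by
  cases L <;> simp [morphSeq]

lemma morphSeq_getLast? (ψ : V → A) : ∀ (L : List V) (φ : V → A),
    ∃ g, (morphSeq ψ φ L).getLast? = some g ∧ (∀ x, x ∈ L → g x = ψ x) ∧
      (∀ x, x ∉ L → g x = φ x)
  | [], φ => ⟨φ, by simp [morphSeq], by simp, fun _ _ => rfl⟩
  | v :: L, φ => by
    obtain ⟨g, hg, h1, h2⟩ := morphSeq_getLast? ψ L (Function.update φ v (ψ v))
    refine ⟨g, ?_, ?_, ?_⟩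
    · rw [morphSeq_cons, show φ :: morphSeq ψ (Function.update φ v (ψ v)) L =
        [φ] ++ morphSeq ψ (Function.update φ v (ψ v)) L from rfl]
      exact getLast?_append_some hg
    · intro x hx
      rcases List.mem_cons.1 hx with rfl | hx
      · by_cases hxL : x ∈ L
        · exact h1 x hxL
        · rw [h2 x hxL, Function.update_self]
      · exact h1 x hx
    · intro x hx
      have hxv : x ≠ v := fun hh => hx (hh ▸ List.mem_cons_self)
      have hxL : x ∉ L := fun hh => hx (List.mem_cons_of_mem _ hh)
      rw [h2 x hxL, Function.update_of_ne hxv]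

lemma morphSeq_chain' (ψ : V → A) : ∀ (L : List V) (φ : V → A),
    (morphSeq ψ φ L).Chain' adjOne
  | [], φ => by simp [morphSeq, List.Chain']
  | v :: L, φ => by
    rw [morphSeq_cons, List.Chain', List.isChain_cons]
    refine ⟨?_, morphSeq_chain' ψ L _⟩
    intro y hy
    rw [morphSeq_head?] at hy
    cases hy
    exact ⟨v, fun x hx => (Function.update_of_ne hx _ _).symm⟩

lemma morphSeq_mem (ψ : V → A) : ∀ (L : List V) (φ g : V → A),
    g ∈ morphSeq ψ φ L → ∀ x, g x = φ x ∨ g x = ψ x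
  | [], φ, g, hg => by
    simp only [morphSeq, List.mem_singleton] at hg
    exact fun x => Or.inl (by rw [hg])
  | v :: L, φ, g, hg => by
    rw [morphSeq_cons, List.mem_cons] at hg
    rcases hg with rfl | hg
    · exact fun x => Or.inl rfl
    · intro x
      rcases morphSeq_mem ψ L _ g hg x with hh | hh
      · by_cases hxv : x = v
        · subst hxv; right; rw [hh, Function.update_self]
        · left; rw [hh, Function.update_of_ne hxv]
      · exact Or.inr hh

end morph

variable [Fintype ι]

lemma valC_eq_one [Nonempty ι] (sat : ι → (V → A) → Prop) (ψ : V → A) (h : ∀ i, sat i ψ) :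
    valC sat ψ = 1 := by
  have : Nat.card {i : ι // sat i ψ} = Fintype.card ι := by
    rw [Nat.card_congr (Equiv.subtypeUnivEquiv h), Nat.card_eq_fintype_card]
  rw [valC, this, div_self]
  exact_mod_cast Fintype.card_ne_zero

lemma valC_eq_one_forall [Nonempty ι] (sat : ι → (V → A) → Prop) (ψ : V → A)
    (h : valC sat ψ = 1) : ∀ i, sat i ψ := by
  classical
  by_contra hcon
  push_neg at hcon
  obtain ⟨i0, hi0⟩ := hcon
  have hlt : Fintype.card {i : ι // sat i ψ} < Fintype.card ι :=
    Fintype.card_subtype_lt hi0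
  rw [valC, div_eq_one_iff_eq (by exact_mod_cast (Fintype.card_ne_zero (α := ι)))] at h
  rw [Nat.card_eq_fintype_card] at h
  exact absurd (Nat.cast_injective h) hlt.ne

lemma valSeqC_le_one (sat : ι → (V → A) → Prop) (l : List (V → A)) :
    valSeqC sat l ≤ 1 := by
  induction l with
  | nil => simp [valSeqC]
  | cons g l ih =>
    rw [valSeqC, List.map_cons, List.foldr_cons]
    exact le_trans (min_le_right _ _) ih

lemma valSeqC_eq_one (sat : ι → (V → A) → Prop) (l : List (V → A))
    (h : ∀ g ∈ l, valC sat g = 1) : valSeqC sat l = 1 := by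
  induction l with
  | nil => simp [valSeqC]
  | cons g l ih =>
    rw [valSeqC, List.map_cons, List.foldr_cons, h g List.mem_cons_self]
    rw [valSeqC] at ih
    rw [ih (fun g' hg' => h g' (List.mem_cons_of_mem _ hg'))]
    simp

end aux

/-- completeness of the 2-CSP-to-4-CSP construction.  Given a binary
constraint graph (edges indexed by nonempty `ι`, endpoints `he`, constraints `hc`),
distinct values `a ≠ b`, and fresh vertices `x = inr 0`, `y = inr 1`, the 4-ary graph `G'`
has one hyperedge `(v, w, x, y)` per edge `(v, w)`, satisfied iff the original constraint
holds or `x` and `y` take the same value.  If some assignment satisfies all edges of `G`,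
then `val_{G'}(ψ'ᵢₙᵢ ↭ ψ'ₜₐᵣ) = 1` for the constant-`a` and constant-`b` assignments. -/
theorem two_to_four_completeness {V A ι : Type*} [Fintype V] [Fintype A]
    [Fintype ι] [Nonempty ι]
    (he : ι → V × V) (hc : ι → Set (A × A)) (a b : A) (hab : a ≠ b)
    (h : ∃ ψ : V → A, valC (fun i ψ => (ψ (he i).1, ψ (he i).2) ∈ hc i) ψ = 1) :
    maxValC (fun i : ι => fun ψ' : (V ⊕ Fin 2) → A =>
        (ψ' (Sum.inl (he i).1), ψ' (Sum.inl (he i).2)) ∈ hc i ∨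
          ψ' (Sum.inr 0) = ψ' (Sum.inr 1))
      (fun _ => a) (fun _ => b) = 1 := by
  classical
  obtain ⟨ψ, hψ⟩ := h
  have hsat : ∀ i, (ψ (he i).1, ψ (he i).2) ∈ hc i :=
    valC_eq_one_forall _ ψ hψ
  let sat : ι → ((V ⊕ Fin 2) → A) → Prop := fun i ψ' =>
      (ψ' (Sum.inl (he i).1), ψ' (Sum.inl (he i).2)) ∈ hc i ∨
        ψ' (Sum.inr 0) = ψ' (Sum.inr 1)
  let Lv : List (V ⊕ Fin 2) := (Finset.univ.toList : List V).map Sum.inl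
  have hinl_mem : ∀ v : V, Sum.inl v ∈ Lv := by
    intro v; simp [Lv]
  have hinr_not_mem : ∀ j : Fin 2, Sum.inr j ∉ Lv := by
    intro j hj; simp [Lv] at hj
  let Ψa : (V ⊕ Fin 2) → A := Sum.elim ψ (fun _ => a)
  let e1 : (V ⊕ Fin 2) → A := Sum.elim ψ (fun j => if j = 0 then b else a)
  let e2 : (V ⊕ Fin 2) → A := Sum.elim ψ (fun _ => b)
  obtain ⟨g1, hg1, hg1in, hg1out⟩ := morphSeq_getLast? Ψa Lv (fun _ => a)
  obtain ⟨g3, hg3, hg3in, hg3out⟩ := morphSeq_getLast? (fun _ : V ⊕ Fin 2 => b) Lv e2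
  have hg1eq : g1 = Ψa := by
    funext x
    cases x with
    | inl v => exact hg1in _ (hinl_mem v)
    | inr j => exact hg1out _ (hinr_not_mem j)
  have hg3eq : g3 = fun _ => b := by
    funext x
    cases x with
    | inl v => exact hg3in _ (hinl_mem v)
    | inr j => exact hg3out _ (hinr_not_mem j)
  let l : List ((V ⊕ Fin 2) → A) :=
    morphSeq Ψa (fun _ => a) Lv ++ e1 :: morphSeq (fun _ => b) e2 Lv
  have hlne : l ≠ [] := by simp [l]
  have hhead : l.head? = some (fun _ => a) :=
    head?_append_some (morphSeq_head? _ _ _)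
  have hlast : l.getLast? = some (fun _ => b) := by
    refine getLast?_append_some ?_
    rw [show e1 :: morphSeq (fun _ : V ⊕ Fin 2 => b) e2 Lv =
      [e1] ++ morphSeq (fun _ : V ⊕ Fin 2 => b) e2 Lv from rfl]
    exact getLast?_append_some (by rw [hg3, hg3eq])
  have hj1 : ∀ j : Fin 2, j ≠ 0 → j = 1 := by decide
  have hj0 : ∀ j : Fin 2, j ≠ 1 → j = 0 := by decide
  have hchain : l.Chain' adjOne := by
    rw [List.Chain', List.isChain_append]
    refine ⟨morphSeq_chain' _ _ _, ?_, ?_⟩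
    · rw [List.isChain_cons]
      refine ⟨?_, morphSeq_chain' _ _ _⟩
      intro y hy
      rw [morphSeq_head?] at hy
      cases hy
      refine ⟨Sum.inr 1, fun x hx => ?_⟩
      cases x with
      | inl v => rfl
      | inr j =>
        have hj : j ≠ 1 := fun hh => hx (by rw [hh])
        rw [hj0 j hj]
        simp [e1, e2]
    · intro x hx y hy
      rw [hg1] at hx
      cases hx
      simp only [List.head?_cons, Option.mem_def, Option.some_inj] at hy
      subst hy
      rw [hg1eq]
      refine ⟨Sum.inr 0, fun x hx => ?_⟩
      cases x with
      | inl v => rfl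
      | inr j =>
        have hj : j ≠ 0 := fun hh => hx (by rw [hh])
        rw [hj1 j hj]
        simp [Ψa, e1]
  have hval : ∀ g ∈ l, valC sat g = 1 := by
    intro g hg
    apply valC_eq_one
    intro i
    rw [List.mem_append, List.mem_cons] at hg
    rcases hg with hg | hg | hg
    · right
      have hmem := morphSeq_mem Ψa Lv (fun _ => a) g hg
      have h0 : g (Sum.inr 0) = a := by
        rcases hmem (Sum.inr 0) with hh | hh
        · exact hh
        · simpa [Ψa] using hh
      have h1 : g (Sum.inr 1) = a := by
        rcases hmem (Sum.inr 1) with hh | hh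
        · exact hh
        · simpa [Ψa] using hh
      rw [h0, h1]
    · subst hg
      left
      simpa [e1] using hsat i
    · right
      have hmem := morphSeq_mem (fun _ : V ⊕ Fin 2 => b) Lv e2 g hg
      have h0 : g (Sum.inr 0) = b := by
        rcases hmem (Sum.inr 0) with hh | hh
        · simpa [e2] using hh
        · exact hh
      have h1 : g (Sum.inr 1) = b := by
        rcases hmem (Sum.inr 1) with hh | hh
        · simpa [e2] using hh
        · exact hh
      rw [h0, h1]
  have hmem1 : (1 : ℝ) ∈ {r : ℝ | ∃ l' : List ((V ⊕ Fin 2) → A), l' ≠ [] ∧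
      l'.head? = some (fun _ => a) ∧ l'.getLast? = some (fun _ => b) ∧
      l'.Chain' adjOne ∧ r = valSeqC sat l'} :=
    ⟨l, hlne, hhead, hlast, hchain, (valSeqC_eq_one sat l hval).symm⟩
  have hub : ∀ r ∈ {r : ℝ | ∃ l' : List ((V ⊕ Fin 2) → A), l' ≠ [] ∧
      l'.head? = some (fun _ => a) ∧ l'.getLast? = some (fun _ => b) ∧
      l'.Chain' adjOne ∧ r = valSeqC sat l'}, r ≤ 1 := by
    rintro r ⟨l', -, -, -, -, rfl⟩
    exact valSeqC_le_one sat l'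
  exact le_antisymm (csSup_le ⟨1, hmem1⟩ hub) (le_csSup ⟨1, hub⟩ hmem1)
end

section
/- In the 2-CSP-to-4-CSP construction: let ε ∈ (0,1); if val_G(ψ) < 1 − ε for every assignment ψ : V → Σ, then val_{G'}(ψ'^ini ↭ ψ'^tar) < 1 − ε. -/
lemma foldr_min_le {l : List ℝ} {a : ℝ} (b : ℝ) (ha : a ∈ l) : l.foldr min b ≤ a := by
  induction l with
  | nil => cases ha
  | cons c t ih =>
    rcases List.mem_cons.1 ha with rfl | h
    · exact min_le_left _ _
    · exact le_trans (min_le_right _ _) (ih h)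

lemma chain_eq {V A : Type*} :
    ∀ (l : List ((V ⊕ Fin 2) → A)), l.Chain' adjOne →
    (∀ ψ ∈ l, ψ (Sum.inr 0) = ψ (Sum.inr 1)) →
    ∀ ψ φ, l.head? = some ψ → l.getLast? = some φ →
    ψ (Sum.inr 0) = φ (Sum.inr 0) := by
  intro l
  induction l with
  | nil => intro _ _ ψ φ hh; simp at hh
  | cons ψ0 t ih =>
    intro hch hall ψ φ hh hl
    simp only [List.head?_cons, Option.some.injEq] at hh
    subst hh
    cases t with
    | nil =>
      simp only [List.getLast?_singleton, Option.some.injEq] at hl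
      subst hl; rfl
    | cons ψ1 t' =>
      have hadj : adjOne ψ0 ψ1 := (List.isChain_cons_cons.1 hch).1
      have hch' : (ψ1 :: t').Chain' adjOne := (List.isChain_cons_cons.1 hch).2
      have h01 : ψ0 (Sum.inr 0) = ψ1 (Sum.inr 0) := by
        obtain ⟨v0, hv0⟩ := hadj
        by_cases h0 : (Sum.inr 0 : V ⊕ Fin 2) = v0
        · have h1 : (Sum.inr 1 : V ⊕ Fin 2) ≠ v0 := by
            rw [← h0]; simp [Fin.ext_iff]
          have e1 := hv0 _ h1
          have e0 := hall ψ0 (by simp)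
          have e0' := hall ψ1 (by simp)
          rw [e0, e1, ← e0']
        · exact hv0 _ h0
      have := ih hch' (fun g hg => hall g (List.mem_cons_of_mem _ hg)) ψ1 φ rfl
        (by simpa using hl)
      rw [h01]; exact this

/-- soundness of the 2-CSP-to-4-CSP construction.  Given a binary constraint
graph (edges indexed by nonempty `ι`, endpoints `he`, constraints `hc`), distinct values
`a ≠ b`, and fresh vertices `x = inr 0`, `y = inr 1`, the 4-ary graph `G'` has one hyperedge
`(v, w, x, y)` per edge `(v, w)`, satisfied iff the original constraint holds or `x` and `y`
take the same value.  If every assignment for `G` has value less than `1 − ε`, then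
`val_{G'}(ψ'ᵢₙᵢ ↭ ψ'ₜₐᵣ) < 1 − ε` for the constant-`a` and constant-`b` assignments. -/
theorem two_to_four_soundness {V A ι : Type*} [Fintype V] [Fintype A]
    [Fintype ι] [Nonempty ι]
    (he : ι → V × V) (hc : ι → Set (A × A)) (a b : A) (hab : a ≠ b)
    (ε : ℝ) (hε0 : 0 < ε) (hε1 : ε < 1)
    (h : ∀ ψ : V → A, valC (fun i ψ => (ψ (he i).1, ψ (he i).2) ∈ hc i) ψ < 1 - ε) :
    maxValC (fun i : ι => fun ψ' : (V ⊕ Fin 2) → A =>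
        (ψ' (Sum.inl (he i).1), ψ' (Sum.inl (he i).2)) ∈ hc i ∨
          ψ' (Sum.inr 0) = ψ' (Sum.inr 1))
      (fun _ => a) (fun _ => b) < 1 - ε := by
  classical
  set sat : ι → (V → A) → Prop := fun i ψ => (ψ (he i).1, ψ (he i).2) ∈ hc i with hsatdef
  set sat' : ι → ((V ⊕ Fin 2) → A) → Prop := fun i ψ' =>
    (ψ' (Sum.inl (he i).1), ψ' (Sum.inl (he i).2)) ∈ hc i ∨
      ψ' (Sum.inr 0) = ψ' (Sum.inr 1) with hsat'def
  obtain ⟨ψM, -, hM⟩ := Finset.exists_max_image (Finset.univ : Finset (V → A))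
    (valC sat) ⟨fun _ => a, Finset.mem_univ _⟩
  have hMlt : valC sat ψM < 1 - ε := h ψM
  have hM0 : 0 ≤ valC sat ψM := by
    refine le_trans ?_ (hM (fun _ => a) (Finset.mem_univ _))
    exact div_nonneg (Nat.cast_nonneg _) (Nat.cast_nonneg _)
  refine lt_of_le_of_lt ?_ hMlt
  apply Real.sSup_le _ hM0
  rintro r ⟨l, hne, hhead, hlast, hchain, rfl⟩
  by_cases hall : ∀ ψ ∈ l, ψ (Sum.inr 0) = ψ (Sum.inr 1)
  · exact absurd (chain_eq l hchain hall _ _ hhead hlast) hab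
  · push_neg at hall
    obtain ⟨ψ', hmem, hxy⟩ := hall
    have hval : valC sat' ψ' = valC sat (fun v => ψ' (Sum.inl v)) := by
      unfold valC
      congr 2
      exact Nat.card_congr (Equiv.subtypeEquivRight (fun i => by
        simp only [hsat'def, hsatdef]
        exact or_iff_left hxy))
    calc valSeqC sat' l ≤ valC sat' ψ' :=
          foldr_min_le 1 (List.mem_map_of_mem (f := valC sat') hmem)
      _ = valC sat (fun v => ψ' (Sum.inl v)) := hval
      _ ≤ valC sat ψM := hM _ (Finset.mem_univ _)
end
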